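/- Let α ∈ (0,1), μ, μ̃, β ∈ ℝ and σ, σ̃ > 0, let K : (0,∞) → ℝ be twice continuously differentiable with K'(z) > 0 for all z > 0, and define ψ(x,y) := y^α·K(x/y) for x, y > 0. Then for all x, y > 0, writing z := x/y: −β·ψ(x,y) + sup_{c ≥ 0} [ (μ−c)·x·∂ψ/∂x + μ̃·y·∂ψ/∂y + ½σ²x²·∂²ψ/∂x² + ½σ̃²y²·∂²ψ/∂y² + (c·x)^α/α ] = y^α · [ ½(σ² + σ̃²)·z²·K''(z) + (μ − μ̃ + (1−α)σ̃²)·z·K'(z) + (−β + αμ̃ + ½α(α−1)σ̃²)·K(z) + ((1−α)/α)·(K'(z))^(α/(α−1)) ], and the supremum is attained at c = (y/x)·(K'(z))^(1/(α−1)). In particular, ψ satisfies the Hamilton–Jacobi–Bellman equation −βψ + sup_{c≥0}[...] = 0 at (x,y) if and only if K satisfies the ordinary differential equation ½(σ²+σ̃²)z²K''(z) + (μ−μ̃+(1−α)σ̃²)zK'(z) + (−β+αμ̃+½α(α−1)σ̃²)K(z) + ((1−α)/α)(K'(z))^(α/(α−1)) = 0 at z = x/y. -/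

import Mathlib

lemma key_ineq {α : ℝ} (hα0 : 0 < α) (hα1 : α < 1) {s u : ℝ} (hs : 0 < s) (hu : 0 ≤ u) :
    u ^ α / α - u * s ^ (α - 1) ≤ s ^ α / α - s * s ^ (α - 1) := by
  have hs1 : (0:ℝ) ≤ s ^ (α - 1) := (Real.rpow_pos_of_pos hs _).le
  have geom := Real.geom_mean_le_arith_mean2_weighted (w₁ := α) (w₂ := 1 - α)
    (p₁ := u * s ^ (α - 1)) (p₂ := s ^ α) hα0.le (by linarith) (mul_nonneg hu hs1)
    (Real.rpow_pos_of_pos hs _).le (by ring)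
  have hprod : (u * s ^ (α - 1)) ^ α * (s ^ α) ^ (1 - α) = u ^ α := by
    rw [Real.mul_rpow hu hs1, ← Real.rpow_mul hs.le, ← Real.rpow_mul hs.le,
      mul_assoc, ← Real.rpow_add hs]
    rw [show (α - 1) * α + α * (1 - α) = 0 by ring, Real.rpow_zero, mul_one]
  rw [hprod] at geom
  have hss : s * s ^ (α - 1) = s ^ α := by
    nth_rewrite 1 [← Real.rpow_one s]
    rw [← Real.rpow_add hs]; norm_num
  have h2 : u ^ α / α ≤ (α * (u * s ^ (α - 1)) + (1 - α) * s ^ α) / α :=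
    (div_le_div_iff_of_pos_right hα0).mpr geom
  have h3 : (α * (u * s ^ (α - 1)) + (1 - α) * s ^ α) / α
      = u * s ^ (α - 1) + s ^ α / α - s ^ α := by
    field_simp; ring
  rw [hss]; linarith [h2, h3.symm ▸ h2]

theorem hjb_reduction_to_ode (α μ μt σ σt β : ℝ)
    (hα0 : 0 < α) (hα1 : α < 1) (hσ : 0 < σ) (hσt : 0 < σt)
    (K K' K'' : ℝ → ℝ)
    (hK : ∀ z > 0, HasDerivAt K (K' z) z)
    (hK' : ∀ z > 0, HasDerivAt K' (K'' z) z)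
    (hK'' : ContinuousOn K'' (Set.Ioi 0))
    (hKpos : ∀ z > 0, 0 < K' z)
    (x y : ℝ) (hx : 0 < x) (hy : 0 < y) :
    let z : ℝ := x / y
    let ψ : ℝ → ℝ → ℝ := fun a b => b ^ α * K (a / b)
    let F : ℝ → ℝ := fun c =>
      (μ - c) * x * deriv (fun x' => ψ x' y) x
      + μt * y * deriv (fun y' => ψ x y') y
      + (1/2) * σ ^ 2 * x ^ 2 * deriv (fun x' => deriv (fun t => ψ t y) x') x
      + (1/2) * σt ^ 2 * y ^ 2 * deriv (fun y' => deriv (fun t => ψ x t) y') y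
      + (c * x) ^ α / α
    let E : ℝ := (1/2) * (σ ^ 2 + σt ^ 2) * z ^ 2 * K'' z
      + (μ - μt + (1 - α) * σt ^ 2) * z * K' z
      + (-β + α * μt + (1/2) * α * (α - 1) * σt ^ 2) * K z
      + ((1 - α) / α) * (K' z) ^ (α / (α - 1))
    (-β * ψ x y + sSup (F '' Set.Ici 0) = y ^ α * E) ∧
    IsGreatest (F '' Set.Ici 0) (F ((y / x) * (K' z) ^ (1 / (α - 1)))) ∧
    ((-β * ψ x y + sSup (F '' Set.Ici 0) = 0) ↔ E = 0) := by
  intro z ψ F E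
  have hz : 0 < z := div_pos hx hy
  have hα1' : α - 1 ≠ 0 := sub_ne_zero_of_ne hα1.ne
  have hKz : 0 < K' z := hKpos z hz
  have hyα : (0:ℝ) < y ^ α := Real.rpow_pos_of_pos hy α
  -- exponent conversion facts
  have ey1 : y ^ (α - 1) = y ^ α / y := by
    rw [Real.rpow_sub hy, Real.rpow_one]
  have ey2 : y ^ (α - 2) = y ^ α / y ^ 2 := by
    rw [Real.rpow_sub hy, show ((2:ℝ) = ((2:ℕ):ℝ)) by norm_num, Real.rpow_natCast]
  have ey3 : y ^ (α - 3) = y ^ α / y ^ 3 := by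
    rw [Real.rpow_sub hy, show ((3:ℝ) = ((3:ℕ):ℝ)) by norm_num, Real.rpow_natCast]
  -- first derivative in x
  have hD1 : ∀ x' > 0, HasDerivAt (fun t => y ^ α * K (t / y)) (y ^ α * K' (x' / y) / y) x' := by
    intro x' hx'
    have h := ((hK (x' / y) (div_pos hx' hy)).comp x'
      ((hasDerivAt_id x').div_const y)).const_mul (y ^ α)
    simpa [mul_one_div, mul_div_assoc, div_eq_mul_inv, mul_assoc] using h
  -- second derivative in x
  have hD1' : HasDerivAt (fun t => y ^ α * K' (t / y) / y)
      (y ^ α * (K'' (x / y) * (1 / y)) / y) x := by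
    exact (((hK' (x / y) (div_pos hx hy)).comp x
      ((hasDerivAt_id x).div_const y)).const_mul (y ^ α)).div_const y
  -- first derivative in y
  have hD2 : ∀ y' > 0, HasDerivAt (fun t => t ^ α * K (x / t))
      (α * y' ^ (α - 1) * K (x / y') - x * y' ^ (α - 2) * K' (x / y')) y' := by
    intro y' hy'
    have hpow : HasDerivAt (fun t : ℝ => t ^ α) (α * y' ^ (α - 1)) y' :=
      Real.hasDerivAt_rpow_const (Or.inl hy'.ne')
    have hinv : HasDerivAt (fun t : ℝ => x / t) (x * -(y' ^ 2)⁻¹) y' := by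
      simpa [div_eq_mul_inv] using (hasDerivAt_inv hy'.ne').const_mul x
    have hKc : HasDerivAt (fun t => K (x / t)) (K' (x / y') * (x * -(y' ^ 2)⁻¹)) y' :=
      (hK (x / y') (div_pos hx hy')).comp y' hinv
    have h := hpow.mul hKc
    refine h.congr_deriv ?_
    have e2 : y' ^ (α - 2) = y' ^ α / y' ^ 2 := by
      rw [Real.rpow_sub hy', show ((2:ℝ) = ((2:ℕ):ℝ)) by norm_num, Real.rpow_natCast]
    rw [e2]
    field_simp
    ring
  -- second derivative in y
  have hD2' : HasDerivAt (fun t => α * t ^ (α - 1) * K (x / t) - x * t ^ (α - 2) * K' (x / t))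
      ((α * ((α - 1) * y ^ (α - 2)) * K (x / y)
        + α * y ^ (α - 1) * (K' (x / y) * (x * -(y ^ 2)⁻¹)))
       - (x * ((α - 2) * y ^ (α - 3)) * K' (x / y)
        + x * y ^ (α - 2) * (K'' (x / y) * (x * -(y ^ 2)⁻¹)))) y := by
    have hinv : HasDerivAt (fun t : ℝ => x / t) (x * -(y ^ 2)⁻¹) y := by
      simpa [div_eq_mul_inv] using (hasDerivAt_inv hy.ne').const_mul x
    have hKc : HasDerivAt (fun t => K (x / t)) (K' (x / y) * (x * -(y ^ 2)⁻¹)) y :=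
      (hK (x / y) hz).comp y hinv
    have hK'c : HasDerivAt (fun t => K' (x / t)) (K'' (x / y) * (x * -(y ^ 2)⁻¹)) y :=
      (hK' (x / y) hz).comp y hinv
    have hpow1 : HasDerivAt (fun t : ℝ => t ^ (α - 1)) ((α - 1) * y ^ (α - 2)) y := by
      have := Real.hasDerivAt_rpow_const (x := y) (p := α - 1) (Or.inl hy.ne')
      rwa [show α - 1 - 1 = α - 2 by ring] at this
    have hpow2 : HasDerivAt (fun t : ℝ => t ^ (α - 2)) ((α - 2) * y ^ (α - 3)) y := by
      have := Real.hasDerivAt_rpow_const (x := y) (p := α - 2) (Or.inl hy.ne')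
      rwa [show α - 2 - 1 = α - 3 by ring] at this
    exact ((hpow1.const_mul α).mul hKc).sub ((hpow2.const_mul x).mul hK'c)
  -- closed forms of the four deriv terms in the goal
  have h1 : deriv (fun x' => ψ x' y) x = y ^ α * K' (x / y) / y := (hD1 x hx).deriv
  have h2 : deriv (fun y' => ψ x y') y
      = α * y ^ (α - 1) * K (x / y) - x * y ^ (α - 2) * K' (x / y) := (hD2 y hy).deriv
  have h3 : deriv (fun x' => deriv (fun t => ψ t y) x') x
      = y ^ α * (K'' (x / y) * (1 / y)) / y := by
    have hev : (fun x' => deriv (fun t => ψ t y) x')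
        =ᶠ[nhds x] (fun x' => y ^ α * K' (x' / y) / y) := by
      filter_upwards [isOpen_Ioi.mem_nhds hx] with t ht using (hD1 t ht).deriv
    rw [hev.deriv_eq, hD1'.deriv]
  have h4 : deriv (fun y' => deriv (fun t => ψ x t) y') y
      = (α * ((α - 1) * y ^ (α - 2)) * K (x / y)
        + α * y ^ (α - 1) * (K' (x / y) * (x * -(y ^ 2)⁻¹)))
       - (x * ((α - 2) * y ^ (α - 3)) * K' (x / y)
        + x * y ^ (α - 2) * (K'' (x / y) * (x * -(y ^ 2)⁻¹))) := by
    have hev : (fun y' => deriv (fun t => ψ x t) y')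
        =ᶠ[nhds y] (fun y' => α * y' ^ (α - 1) * K (x / y') - x * y' ^ (α - 2) * K' (x / y')) := by
      filter_upwards [isOpen_Ioi.mem_nhds hy] with t ht using (hD2 t ht).deriv
    rw [hev.deriv_eq, hD2'.deriv]
  -- algebraic abbreviation of F
  have hFeq : ∀ c : ℝ, F c =
      (μ * x * (y ^ α * K' (x / y) / y)
        + μt * y * (α * (y ^ α / y) * K (x / y) - x * (y ^ α / y ^ 2) * K' (x / y))
        + (1/2) * σ ^ 2 * x ^ 2 * (y ^ α * (K'' (x / y) * (1 / y)) / y)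
        + (1/2) * σt ^ 2 * y ^ 2 *
          ((α * ((α - 1) * (y ^ α / y ^ 2)) * K (x / y)
            + α * (y ^ α / y) * (K' (x / y) * (x * -(y ^ 2)⁻¹)))
           - (x * ((α - 2) * (y ^ α / y ^ 3)) * K' (x / y)
            + x * (y ^ α / y ^ 2) * (K'' (x / y) * (x * -(y ^ 2)⁻¹)))))
      + ((c * x) ^ α / α - (c * x) * (y ^ (α - 1) * K' (x / y))) := by
    intro c
    simp only [F]
    rw [h1, h2, h3, h4, ey1, ey2, ey3]
    ring
  -- the maximizer
  set c₀ : ℝ := (y / x) * (K' z) ^ (1 / (α - 1)) with hc₀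
  have hKr : (0:ℝ) < (K' z) ^ (1 / (α - 1)) := Real.rpow_pos_of_pos hKz _
  have hc₀pos : 0 < c₀ := mul_pos (div_pos hy hx) hKr
  have hsx : c₀ * x = y * (K' z) ^ (1 / (α - 1)) := by
    rw [hc₀]; field_simp
  have hspos : 0 < c₀ * x := mul_pos hc₀pos hx
  have hs1 : (c₀ * x) ^ (α - 1) = y ^ (α - 1) * K' z := by
    rw [hsx, Real.mul_rpow hy.le hKr.le, ← Real.rpow_mul hKz.le,
      show 1 / (α - 1) * (α - 1) = 1 by field_simp, Real.rpow_one]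
  -- F c ≤ F c₀ for c ≥ 0
  have hub : ∀ c ∈ Set.Ici (0:ℝ), F c ≤ F c₀ := by
    intro c hc
    have key := key_ineq hα0 hα1 (s := c₀ * x) (u := c * x) hspos
      (mul_nonneg hc hx.le)
    rw [hs1] at key
    rw [hFeq c, hFeq c₀]
    exact add_le_add (le_refl _) key
  have hgreat : IsGreatest (F '' Set.Ici 0) (F c₀) :=
    ⟨⟨c₀, hc₀pos.le, rfl⟩, by rintro _ ⟨c, hc, rfl⟩; exact hub c hc⟩
  have hsup : sSup (F '' Set.Ici 0) = F c₀ := hgreat.csSup_eq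
  -- value of the extra terms at c₀
  have hP1 : (c₀ * x) ^ α = y ^ α * (K' z) ^ (α / (α - 1)) := by
    rw [hsx, Real.mul_rpow hy.le hKr.le, ← Real.rpow_mul hKz.le,
      show 1 / (α - 1) * α = α / (α - 1) by ring]
  have hP2 : (c₀ * x) * (y ^ (α - 1) * K' z) = y ^ α * (K' z) ^ (α / (α - 1)) := by
    rw [hsx]
    have e1 : y * y ^ (α - 1) = y ^ α := by
      nth_rewrite 1 [← Real.rpow_one y]
      rw [← Real.rpow_add hy]; norm_num
    have e2 : (K' z) ^ (1 / (α - 1)) * K' z = (K' z) ^ (α / (α - 1)) := by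
      nth_rewrite 2 [← Real.rpow_one (K' z)]
      rw [← Real.rpow_add hKz, show 1 / (α - 1) + 1 = α / (α - 1) by field_simp; ring]
    calc y * (K' z) ^ (1 / (α - 1)) * (y ^ (α - 1) * K' z)
        = (y * y ^ (α - 1)) * ((K' z) ^ (1 / (α - 1)) * K' z) := by ring
      _ = y ^ α * (K' z) ^ (α / (α - 1)) := by rw [e1, e2]
  -- main equality
  have hmain : -β * ψ x y + sSup (F '' Set.Ici 0) = y ^ α * E := by
    rw [hsup, hFeq c₀, hP1, hP2]
    simp only [ψ, E, z]
    field_simp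
    ring
  refine ⟨hmain, hgreat, ?_⟩
  rw [hmain]
  constructor
  · intro h
    rcases mul_eq_zero.mp h with h' | h'
    · exact absurd h' hyα.ne'
    · exact h'
  · intro h; rw [h, mul_zero]
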